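/- arXiv:1506.04675 — 2 statements merged into one kernel-verified Lean document; each statement's English description precedes it below -/
import Mathlib

section
/- Let Σ₂ have one sort and countably many unary predicates q₀, q₁, q₂, …, and let T₂ = {∃=1 y (y = y)} ∪ {∀y (q₀(y) → q_i(y)) : i ∈ ℕ}. Then the category Mod(T₂) of models of T₂ with elementary embeddings is discrete and has 2^{ℵ₀} isomorphism classes of objects. -/
open FirstOrder FirstOrder.Language CategoryTheory

universe u v w

namespace MoritaPaper

/-- The category `Mod(T)` of models of a first-order theory `T`, with elementary
embeddings as morphisms. -/
instance modelCat {L : FirstOrder.Language.{u, v}} (T : L.Theory) :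
    Category (Theory.ModelType.{u, v, w} T) where
  Hom M N := M ↪ₑ[L] N
  id M := ElementaryEmbedding.refl L M
  comp f g := g.comp f
  id_comp _ := ElementaryEmbedding.ext fun _ => rfl
  comp_id _ := ElementaryEmbedding.ext fun _ => rfl
  assoc _ _ _ := ElementaryEmbedding.ext fun _ => rfl

/-- The setoid identifying isomorphic models of `T`. -/
def isoSetoid {L : FirstOrder.Language.{u, v}} (T : L.Theory) :
    Setoid (Theory.ModelType.{u, v, w} T) where
  r M N := Nonempty ((M : Type w) ≃[L] (N : Type w))
  iseqv := ⟨fun M => ⟨FirstOrder.Language.Equiv.refl L (M : Type w)⟩, fun ⟨e⟩ => ⟨e.symm⟩, fun ⟨e⟩ ⟨f⟩ => ⟨f.comp e⟩⟩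

/-- A single-sorted signature with no function symbols and countably many unary predicate
symbols `p₀, p₁, p₂, …`. -/
def countUnaryLang : FirstOrder.Language :=
  ⟨fun _ => Empty, fun n => match n with | 1 => ℕ | _ => Empty⟩

/-- The `i`-th unary predicate symbol. -/
def pS (i : ℕ) : countUnaryLang.Relations 1 := i

/-- The sentence `∃=1 x (x = x)`, i.e. `∃x ((x = x) ∧ ∀z ((z = z) → x = z))`. -/
def uniqueSent (L : FirstOrder.Language.{u, v}) : L.Sentence :=
  ∃' ((&0 =' &0) ⊓ ∀' ((&1 =' &1) ⟹ (&0 =' &1)))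

/-- The theory `T₁ = {∃=1 x (x = x)}`. -/
def T₁ : countUnaryLang.Theory := {uniqueSent countUnaryLang}

/-- The theory `T₂ = {∃=1 y (y = y)} ∪ {∀y (q₀(y) → q_i(y)) : i ∈ ℕ}`. -/
def T₂ : countUnaryLang.Theory :=
  {uniqueSent countUnaryLang} ∪
    Set.range fun i : ℕ => ∀' ((pS 0).boundedFormula₁ &0 ⟹ (pS i).boundedFormula₁ &0)

/-! ### Auxiliary lemmas -/

theorem subsing {L : FirstOrder.Language.{u, v}} (M : Type w) [L.Structure M]
    (h : M ⊨ uniqueSent L) : Subsingleton M := by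
  simp only [uniqueSent, Sentence.Realize, Formula.Realize, BoundedFormula.realize_ex,
    BoundedFormula.realize_inf, BoundedFormula.realize_all, BoundedFormula.realize_imp,
    BoundedFormula.realize_bdEqual, Term.realize_var] at h
  obtain ⟨x, -, hx⟩ := h
  constructor
  intro a b
  have ha := hx a
  have hb := hx b
  simp [Fin.snoc] at ha hb
  rw [← ha, ← hb]

instance modelSubsingleton (M : Theory.ModelType.{0, 0, 0} T₂) : Subsingleton M :=
  subsing M (Theory.realize_sentence_of_mem T₂ (Or.inl rfl))

/-- The set of indices of predicates holding at the (unique) point of a model. -/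
def specSet (M : Type*) [countUnaryLang.Structure M] [Nonempty M] : Set ℕ :=
  {i | Structure.RelMap (pS i) fun _ : Fin 1 => Classical.arbitrary M}

theorem relMap_iff {M : Type*} [countUnaryLang.Structure M] [Nonempty M] [Subsingleton M]
    (i : ℕ) (x : Fin 1 → M) : Structure.RelMap (pS i) x ↔ i ∈ specSet M := by
  rw [show x = fun _ : Fin 1 => Classical.arbitrary M from funext fun _ =>
    Subsingleton.elim _ _]
  exact Iff.rfl

/-- The unit-type structure realizing exactly the predicates in `S`. -/
def struc (S : Set ℕ) : countUnaryLang.Structure Unit where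
  funMap {_} f := f.elim
  RelMap {n} r _ := match n, r with
    | 1, i => i ∈ S
    | 0, r => r.elim
    | (_+2), r => r.elim

theorem struc_spec (S : Set ℕ) : @specSet Unit (struc S) ⟨()⟩ = S := rfl

theorem unit_models (S : Set ℕ) (hS : 0 ∈ S → S = Set.univ) :
    @Theory.Model countUnaryLang Unit (struc S) T₂ := by
  letI := struc S
  constructor
  intro φ hφ
  rcases hφ with hφ | ⟨i, rfl⟩
  · rw [Set.mem_singleton_iff.1 hφ]
    simp only [uniqueSent, Sentence.Realize, Formula.Realize, BoundedFormula.realize_ex,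
      BoundedFormula.realize_inf, BoundedFormula.realize_all, BoundedFormula.realize_imp,
      BoundedFormula.realize_bdEqual, Term.realize_var]
    exact ⟨(), by simp, fun _ _ => by simp⟩
  · simp only [Sentence.Realize, Formula.Realize, BoundedFormula.realize_all,
      BoundedFormula.realize_imp, BoundedFormula.realize_rel₁, Term.realize_var]
    intro a h0
    have h0' : (0 : ℕ) ∈ S := h0
    show i ∈ S
    rw [hS h0']
    trivial

/-- The bundled unit model with predicate set `S`. -/
def modelOf (S : Set ℕ) (hS : 0 ∈ S → S = Set.univ) : Theory.ModelType.{0, 0, 0} T₂ :=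
  @Theory.ModelType.mk countUnaryLang T₂ Unit (struc S) (unit_models S hS) ⟨()⟩

/-- Between one-point models with the same spec there is an `L`-equivalence. -/
noncomputable def equivOfSpec {M N : Type*} [countUnaryLang.Structure M]
    [countUnaryLang.Structure N] [Nonempty M] [Nonempty N] [Subsingleton M] [Subsingleton N]
    (h : specSet M = specSet N) : M ≃[countUnaryLang] N where
  toEquiv := ⟨fun _ => Classical.arbitrary N, fun _ => Classical.arbitrary M,
    fun _ => Subsingleton.elim _ _, fun _ => Subsingleton.elim _ _⟩
  map_fun' := fun {n} f _ => f.elim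
  map_rel' := by
    intro n r x
    match n, r with
    | 1, (i : ℕ) =>
      exact ((relMap_iff i _).trans (by rw [h])).trans (relMap_iff i x).symm

theorem spec_eq_of_equiv {M N : Type*} [countUnaryLang.Structure M]
    [countUnaryLang.Structure N] [Nonempty M] [Nonempty N] [Subsingleton N]
    (f : M ≃[countUnaryLang] N) : specSet M = specSet N := by
  ext i
  have := StrongHomClass.map_rel f (pS i) (fun _ : Fin 1 => Classical.arbitrary M)
  have he : (f ∘ fun _ : Fin 1 => Classical.arbitrary M)
      = fun _ : Fin 1 => Classical.arbitrary N := funext fun _ => Subsingleton.elim _ _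
  rw [he] at this
  exact this.symm

theorem spec_eq_of_elem {M N : Type*} [countUnaryLang.Structure M]
    [countUnaryLang.Structure N] [Nonempty M] [Nonempty N] [Subsingleton N]
    (f : M ↪ₑ[countUnaryLang] N) : specSet M = specSet N := by
  ext i
  have := StrongHomClass.map_rel f (pS i) (fun _ : Fin 1 => Classical.arbitrary M)
  have he : (f ∘ fun _ : Fin 1 => Classical.arbitrary M)
      = fun _ : Fin 1 => Classical.arbitrary N := funext fun _ => Subsingleton.elim _ _
  rw [he] at this
  exact this.symm

/-- Two models of `T₂` with the same spec are isomorphic, as quotient classes. -/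
theorem class_eq_of_spec {M N : Theory.ModelType.{0, 0, 0} T₂}
    (h : specSet (M : Type 0) = specSet (N : Type 0)) :
    Quotient.mk (isoSetoid.{0,0,0} T₂) M = Quotient.mk (isoSetoid.{0,0,0} T₂) N :=
  Quotient.sound ⟨equivOfSpec h⟩

/-- The comparison functor to the discrete category on isomorphism classes. -/
def compFunctor :
    Theory.ModelType.{0, 0, 0} T₂ ⥤ Discrete (_root_.Quotient (isoSetoid.{0,0,0} T₂)) where
  obj M := ⟨Quotient.mk _ M⟩
  map {M N} f := eqToHom (congrArg Discrete.mk (class_eq_of_spec (spec_eq_of_elem f)))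
  map_id _ := Subsingleton.elim _ _
  map_comp _ _ := Subsingleton.elim _ _

instance : compFunctor.Faithful :=
  ⟨fun {M N} {f g} _ => ElementaryEmbedding.ext fun _ => Subsingleton.elim _ _⟩

noncomputable instance : compFunctor.Full := by
  constructor
  intro M N h
  have he : Quotient.mk (isoSetoid.{0,0,0} T₂) M = Quotient.mk (isoSetoid.{0,0,0} T₂) N :=
    Discrete.eq_of_hom h
  obtain ⟨e⟩ := Quotient.exact he
  exact ⟨e.toElementaryEmbedding, Subsingleton.elim _ _⟩

instance : compFunctor.EssSurj := by
  constructor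
  intro q
  exact ⟨q.as.out, ⟨eqToIso (congrArg Discrete.mk (Quotient.out_eq q.as))⟩⟩

instance : compFunctor.IsEquivalence := {}


theorem spec_cond (M : Theory.ModelType.{0, 0, 0} T₂) :
    0 ∈ specSet (M : Type 0) → specSet (M : Type 0) = Set.univ := by
  intro h0
  ext i
  simp only [Set.mem_univ, iff_true]
  have hi : (M : Type 0) ⊨ ∀' ((pS 0).boundedFormula₁ &0 ⟹ (pS i).boundedFormula₁ &0) :=
    Theory.realize_sentence_of_mem T₂ (Or.inr ⟨i, rfl⟩)
  simp only [Sentence.Realize, Formula.Realize, BoundedFormula.realize_all,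
    BoundedFormula.realize_imp, BoundedFormula.realize_rel₁, Term.realize_var] at hi
  have := hi (Classical.arbitrary M)
  exact (relMap_iff i _).1 (this ((relMap_iff 0 _).2 h0))

/-- The spec of an isomorphism class. -/
def specQuot : _root_.Quotient (isoSetoid.{0,0,0} T₂) → Set ℕ :=
  Quotient.lift (fun M : Theory.ModelType.{0,0,0} T₂ => specSet (M : Type 0))
    (fun _ _ hMN => Nonempty.elim hMN fun e => spec_eq_of_equiv e)

theorem specQuot_bij : Function.Bijective (fun q : _root_.Quotient (isoSetoid.{0,0,0} T₂) =>
    (⟨specQuot q, Quotient.inductionOn q spec_cond⟩ :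
      {S : Set ℕ // 0 ∈ S → S = Set.univ})) := by
  constructor
  · intro x y h
    induction x using Quotient.inductionOn
    induction y using Quotient.inductionOn
    exact class_eq_of_spec (congrArg Subtype.val h)
  · rintro ⟨S, hS⟩
    refine ⟨Quotient.mk _ (modelOf S hS), ?_⟩
    apply Subtype.ext
    exact struc_spec S

/-- The isomorphism classes of models of `T₂` biject with sets of indices. -/
noncomputable def classEquiv :
    _root_.Quotient (isoSetoid.{0,0,0} T₂) ≃ {S : Set ℕ // 0 ∈ S → S = Set.univ} :=
  Equiv.ofBijective _ specQuot_bij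

/-! ### Main theorem -/

/-- The category `Mod(T₂)` of models of
`T₂ = {∃=1 y (y = y)} ∪ {∀y (q₀(y) → q_i(y)) : i ∈ ℕ}` (with elementary embeddings) is
discrete and has `2^ℵ₀` isomorphism classes of objects. -/
theorem modelCat_T₂_discrete_card :
    (∃ ι : Type*, Nonempty (Theory.ModelType.{0, 0, 0} T₂ ≌ Discrete ι)) ∧
    Cardinal.mk (Quotient (isoSetoid.{0, 0, 0} T₂)) = 2 ^ Cardinal.aleph0 := by
  constructor
  · exact ⟨ULift {S : Set ℕ // 0 ∈ S → S = Set.univ},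
      ⟨compFunctor.asEquivalence.trans
        (Discrete.equivalence (classEquiv.trans Equiv.ulift.symm))⟩⟩
  · have hU : Cardinal.mk (ULift.{1} (Set ℕ)) = 2 ^ Cardinal.aleph0 := by
      rw [Cardinal.mk_uLift, Cardinal.mk_set, Cardinal.mk_nat, Cardinal.lift_two_power,
        Cardinal.lift_aleph0]
    apply le_antisymm
    · have hinj : Function.Injective (fun q : _root_.Quotient (isoSetoid.{0,0,0} T₂) =>
          (ULift.up.{1} (Quotient.lift
            (fun M : Theory.ModelType.{0,0,0} T₂ => specSet (M : Type 0))
            (fun M N hMN => Nonempty.elim hMN fun e => spec_eq_of_equiv e) q))) := by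
        intro x y
        induction x using Quotient.inductionOn
        induction y using Quotient.inductionOn
        intro h
        exact class_eq_of_spec (congrArg ULift.down h)
      rw [← hU]
      exact Cardinal.mk_le_of_injective hinj
    · have hinj : Function.Injective (fun S : ULift.{1} (Set ℕ) =>
          Quotient.mk (isoSetoid.{0,0,0} T₂)
            (modelOf (Nat.succ '' S.down) (fun h0 => absurd h0 (by simp)))) := by
        intro S S' h
        obtain ⟨e⟩ := Quotient.exact h
        have hspec := spec_eq_of_equiv e
        have h1 : @specSet Unit (struc (Nat.succ '' S.down)) ⟨()⟩ = Nat.succ '' S.down :=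
          struc_spec _
        have h2 : @specSet Unit (struc (Nat.succ '' S'.down)) ⟨()⟩ = Nat.succ '' S'.down :=
          struc_spec _
        have himg : Nat.succ '' S.down = Nat.succ '' S'.down := by
          rw [← h1, ← h2]; exact hspec
        have : S.down = S'.down := Set.image_injective.2 Nat.succ_injective himg
        exact ULift.ext _ _ this
      rw [← hU]
      exact Cardinal.mk_le_of_injective hinj

end MoritaPaper
end

section
/- The theories T₁ = {∃=1 x (x=x)} in a signature with countably many unary predicates p_i, and T₂ = {∃=1 y (y=y)} ∪ {∀y(q₀(y) → q_i(y)) : i ∈ ℕ} in a signature with countably many unary predicates q_i, have equivalent categories of models: both Mod(T₁) and Mod(T₂) are discrete categories with exactly 2^{ℵ₀} isomorphism classes of objects, so any bijection between isomorphism classes induces an equivalence of categories. -/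
open FirstOrder FirstOrder.Language CategoryTheory

universe u v w

namespace MoritaPaper

section Aux

theorem realize_uniqueSent_iff (L : FirstOrder.Language) (M : Type) [L.Structure M] :
    M ⊨ uniqueSent L ↔ (Nonempty M ∧ Subsingleton M) := by
  constructor
  · intro h
    simp only [uniqueSent, Sentence.Realize, Formula.Realize, BoundedFormula.realize_ex,
      BoundedFormula.realize_inf, BoundedFormula.realize_all, BoundedFormula.realize_imp,
      BoundedFormula.realize_bdEqual, Term.realize_var] at h
    obtain ⟨a, -, ha⟩ := h
    refine ⟨⟨a⟩, ⟨fun x y => ?_⟩⟩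
    have hx := ha x
    have hy := ha y
    simp [Fin.snoc] at hx hy
    rw [← hx, ← hy]
  · rintro ⟨hne, hss⟩
    simp only [uniqueSent, Sentence.Realize, Formula.Realize, BoundedFormula.realize_ex,
      BoundedFormula.realize_inf, BoundedFormula.realize_all, BoundedFormula.realize_imp,
      BoundedFormula.realize_bdEqual, Term.realize_var]
    refine ⟨Classical.arbitrary M, by trivial, fun y _ => ?_⟩
    simp [Fin.snoc]
    exact Subsingleton.elim _ _

/-- The standard one-element structure realizing exactly the predicates in `S`. -/
def stdStructure (S : Set ℕ) : countUnaryLang.Structure Unit where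
  funMap := fun {n} f _ => Empty.elim f
  RelMap := fun {n} r _ =>
    match n, r with
    | 1, i => i ∈ S
    | 0, r => Empty.elim r
    | (_ + 2), r => Empty.elim r

variable {T : countUnaryLang.Theory}

/-- The set of predicates holding in a model. -/
def predSet (M : Theory.ModelType.{0,0,0} T) : Set ℕ :=
  {i | ∀ x : Fin 1 → M, Structure.RelMap (pS i) x}

theorem subsingleton_of_model (hT : uniqueSent countUnaryLang ∈ T)
    (M : Theory.ModelType.{0,0,0} T) : Subsingleton M :=
  ((realize_uniqueSent_iff countUnaryLang M).1 (M.is_model.realize_of_mem _ hT)).2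

theorem mem_predSet_iff (hT : uniqueSent countUnaryLang ∈ T) {M : Theory.ModelType.{0,0,0} T}
    (i : ℕ) (x : Fin 1 → M) : i ∈ predSet M ↔ Structure.RelMap (pS i) x := by
  haveI := subsingleton_of_model hT M
  exact ⟨fun h => h x, fun h y => by
    rw [show y = x from funext fun k => Subsingleton.elim _ _]; exact h⟩

/-- The unique bijection between two one-element models with the same predicates is an
isomorphism. -/
noncomputable def modelEquiv (hT : uniqueSent countUnaryLang ∈ T) {M N : Theory.ModelType.{0,0,0} T}
    (h : predSet M = predSet N) : (M : Type) ≃[countUnaryLang] (N : Type) := by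
  haveI := subsingleton_of_model hT M
  haveI := subsingleton_of_model hT N
  refine ⟨_root_.equivOfSubsingletonOfSubsingleton (fun _ => Classical.arbitrary N)
    (fun _ => Classical.arbitrary M), fun {n} f x => Empty.elim f, fun {n} r x => ?_⟩
  match n, r with
  | 1, i =>
    exact (mem_predSet_iff hT i _).symm.trans (h ▸ mem_predSet_iff hT i x)

theorem predSet_eq_of_equiv (hT : uniqueSent countUnaryLang ∈ T)
    {M N : Theory.ModelType.{0,0,0} T} (e : (M : Type) ≃[countUnaryLang] (N : Type)) :
    predSet M = predSet N := by
  ext i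
  rw [mem_predSet_iff hT i (fun _ => Classical.arbitrary M),
    mem_predSet_iff hT i ((e : M → N) ∘ fun _ => Classical.arbitrary M)]
  exact (StrongHomClass.map_rel e (pS i) _).symm

theorem predSet_eq_of_hom (hT : uniqueSent countUnaryLang ∈ T)
    {M N : Theory.ModelType.{0,0,0} T} (f : M ⟶ N) : predSet M = predSet N := by
  let g : (M : Type) ↪ₑ[countUnaryLang] (N : Type) := f
  ext i
  rw [mem_predSet_iff hT i (fun _ => Classical.arbitrary M),
    mem_predSet_iff hT i ((g : M → N) ∘ fun _ => Classical.arbitrary M)]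
  exact (StrongHomClass.map_rel g (pS i) _).symm

theorem hom_subsingleton (hT : uniqueSent countUnaryLang ∈ T)
    (M N : Theory.ModelType.{0,0,0} T) : Subsingleton (M ⟶ N) := by
  haveI := subsingleton_of_model hT N
  exact ⟨fun f g => ElementaryEmbedding.ext fun x => Subsingleton.elim _ _⟩

/-- The standard one-element model. -/
def stdModel (S : Set ℕ) (h : @Theory.Model _ Unit (stdStructure S) T) :
    Theory.ModelType.{0,0,0} T :=
  { Carrier := Unit, struc := stdStructure S, is_model := h, nonempty' := ⟨()⟩ }

theorem predSet_stdModel (hT : uniqueSent countUnaryLang ∈ T) (S : Set ℕ)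
    (h : @Theory.Model _ Unit (stdStructure S) T) : predSet (stdModel S h) = S := by
  ext i
  rw [mem_predSet_iff hT i (fun _ => ())]
  exact Iff.rfl

/-- An isomorphism in `Mod T` from an equality of predicate sets. -/
noncomputable def modelIso (hT : uniqueSent countUnaryLang ∈ T) {M N : Theory.ModelType.{0,0,0} T}
    (h : predSet M = predSet N) : M ≅ N := by
  haveI := hom_subsingleton hT M M
  haveI := hom_subsingleton hT N N
  exact ⟨(modelEquiv hT h).toElementaryEmbedding, (modelEquiv hT h.symm).toElementaryEmbedding,
    Subsingleton.elim _ _, Subsingleton.elim _ _⟩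

/-- The general equivalence between `Mod T` and a discrete category. -/
noncomputable def modEquivDiscrete (hT : uniqueSent countUnaryLang ∈ T) (𝒮 : Set (Set ℕ))
    (hstd : ∀ S ∈ 𝒮, @Theory.Model _ Unit (stdStructure S) T)
    (hpred : ∀ M : Theory.ModelType.{0,0,0} T, predSet M ∈ 𝒮) :
    Theory.ModelType.{0,0,0} T ≌ Discrete ↥𝒮 :=
  CategoryTheory.Equivalence.mk
    { obj := fun M => ⟨⟨predSet M, hpred M⟩⟩
      map := fun f => Discrete.eqToHom (Subtype.ext (predSet_eq_of_hom hT f))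
      map_id := fun _ => Subsingleton.elim _ _
      map_comp := fun _ _ => Subsingleton.elim _ _ }
    (Discrete.functor fun S => stdModel S.1 (hstd S.1 S.2))
    (NatIso.ofComponents
      (fun M => modelIso hT (predSet_stdModel hT (predSet M) (hstd _ (hpred M))).symm)
      (fun {M N} f =>
        (hom_subsingleton hT M (stdModel (predSet N) (hstd _ (hpred N)))).allEq _ _))
    (Discrete.natIso fun S =>
      eqToIso (congrArg Discrete.mk (Subtype.ext (predSet_stdModel hT S.as.1 _))))

/-- The quotient by isomorphism is equivalent to `𝒮`. -/
noncomputable def quotEquiv (hT : uniqueSent countUnaryLang ∈ T) (𝒮 : Set (Set ℕ))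
    (hstd : ∀ S ∈ 𝒮, @Theory.Model _ Unit (stdStructure S) T)
    (hpred : ∀ M : Theory.ModelType.{0,0,0} T, predSet M ∈ 𝒮) :
    Quotient (isoSetoid.{0,0,0} T) ≃ ↥𝒮 where
  toFun := Quotient.lift (fun M => (⟨predSet M, hpred M⟩ : ↥𝒮))
    (fun M N ⟨e⟩ => Subtype.ext (predSet_eq_of_equiv hT e))
  invFun := fun S => ⟦stdModel S.1 (hstd S.1 S.2)⟧
  left_inv := fun q => Quotient.inductionOn q fun M =>
    Quotient.sound ⟨modelEquiv hT (predSet_stdModel hT (predSet M) (hstd _ (hpred M)))⟩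
  right_inv := fun S => Subtype.ext (predSet_stdModel hT S.1 _)

end Aux

section Main

theorem uniqueSent_mem_T₁ : uniqueSent countUnaryLang ∈ T₁ := rfl

theorem uniqueSent_mem_T₂ : uniqueSent countUnaryLang ∈ T₂ := Or.inl rfl

theorem stdModel_T₁ (S : Set ℕ) : @Theory.Model _ Unit (stdStructure S) T₁ := by
  letI := stdStructure S
  refine ⟨fun φ hφ => ?_⟩
  rw [show φ = uniqueSent countUnaryLang from hφ]
  exact (realize_uniqueSent_iff _ _).2 ⟨⟨()⟩, inferInstance⟩

/-- The allowed predicate sets for `T₂`. -/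
def 𝒮₂ : Set (Set ℕ) := {S | 0 ∈ S → S = Set.univ}

theorem realize_impSent (M : Type) [countUnaryLang.Structure M] (i : ℕ) :
    (M ⊨ (∀' ((pS 0).boundedFormula₁ &0 ⟹ (pS i).boundedFormula₁ &0) :
        countUnaryLang.Sentence)) ↔
      ∀ y : M, Structure.RelMap (pS 0) ![y] → Structure.RelMap (pS i) ![y] := by
  simp only [Sentence.Realize, Formula.Realize, BoundedFormula.realize_all,
    BoundedFormula.realize_imp, BoundedFormula.realize_rel₁, Term.realize_var]
  rfl

theorem stdModel_T₂ {S : Set ℕ} (hS : S ∈ 𝒮₂) :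
    @Theory.Model _ Unit (stdStructure S) T₂ := by
  letI := stdStructure S
  refine ⟨fun φ hφ => ?_⟩
  rcases hφ with hφ | ⟨i, rfl⟩
  · rw [show φ = uniqueSent countUnaryLang from hφ]
    exact (realize_uniqueSent_iff _ _).2 ⟨⟨()⟩, inferInstance⟩
  · rw [realize_impSent]
    intro y h0 
    have : S = Set.univ := hS h0
    show i ∈ S
    rw [this]
    trivial

theorem predSet_mem_𝒮₂ (M : Theory.ModelType.{0,0,0} T₂) : predSet M ∈ 𝒮₂ := by
  intro h0
  ext i
  simp only [Set.mem_univ, iff_true]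
  have hi := M.is_model.realize_of_mem
    (∀' ((pS 0).boundedFormula₁ &0 ⟹ (pS i).boundedFormula₁ &0)) (Or.inr ⟨i, rfl⟩)
  rw [realize_impSent] at hi
  rw [mem_predSet_iff uniqueSent_mem_T₂ i (![Classical.arbitrary M])]
  exact hi _ ((mem_predSet_iff uniqueSent_mem_T₂ 0 (![Classical.arbitrary M])).1 h0)

theorem mk_𝒮₂ : Cardinal.mk ↥𝒮₂ = 2 ^ Cardinal.aleph0 := by
  refine le_antisymm ?_ ?_
  · calc Cardinal.mk ↥𝒮₂ ≤ Cardinal.mk (Set ℕ) := Cardinal.mk_subtype_le _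
    _ = 2 ^ Cardinal.aleph0 := by rw [Cardinal.mk_set, Cardinal.mk_nat]
  · haveI : Infinite {n : ℕ // 0 < n} :=
      Infinite.of_injective (fun k => ⟨k + 1, k.succ_pos⟩)
        (fun a b h => by simpa using congrArg Subtype.val h)
    have h1 : Cardinal.mk (Set {n : ℕ // 0 < n}) = 2 ^ Cardinal.aleph0 := by
      rw [Cardinal.mk_set, Cardinal.mk_eq_aleph0]
    rw [← h1]
    refine Cardinal.mk_le_of_injective (f := fun s : Set {n : ℕ // 0 < n} =>
      (⟨Subtype.val '' s, fun h0 => absurd h0 (by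
        rintro ⟨⟨n, hn⟩, -, rfl⟩
        exact lt_irrefl 0 hn)⟩ : ↥𝒮₂)) ?_
    intro s t hst
    exact Set.image_injective.2 Subtype.val_injective (congrArg Subtype.val hst)

end Main

/-- The theories `T₁ = {∃=1 x (x = x)}` and
`T₂ = {∃=1 y (y = y)} ∪ {∀y (q₀(y) → q_i(y)) : i ∈ ℕ}` have equivalent categories of
models: both `Mod(T₁)` and `Mod(T₂)` are discrete categories with exactly `2^ℵ₀`
isomorphism classes of objects, and `Mod(T₁) ≌ Mod(T₂)`. -/
theorem T₁_T₂_categoricallyEquivalent :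
    (∃ ι : Type*, Nonempty (Theory.ModelType.{0, 0, 0} T₁ ≌ Discrete ι)) ∧
    (∃ ι : Type*, Nonempty (Theory.ModelType.{0, 0, 0} T₂ ≌ Discrete ι)) ∧
    Cardinal.mk (Quotient (isoSetoid.{0, 0, 0} T₁)) = 2 ^ Cardinal.aleph0 ∧
    Cardinal.mk (Quotient (isoSetoid.{0, 0, 0} T₂)) = 2 ^ Cardinal.aleph0 ∧
    Nonempty (Theory.ModelType.{0, 0, 0} T₁ ≌ Theory.ModelType.{0, 0, 0} T₂) := by
  have hstd₁ : ∀ S ∈ (Set.univ : Set (Set ℕ)), @Theory.Model _ Unit (stdStructure S) T₁ :=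
    fun S _ => stdModel_T₁ S
  have hpred₁ : ∀ M : Theory.ModelType.{0,0,0} T₁, predSet M ∈ (Set.univ : Set (Set ℕ)) :=
    fun _ => trivial
  have hstd₂ : ∀ S ∈ 𝒮₂, @Theory.Model _ Unit (stdStructure S) T₂ := fun _ hS => stdModel_T₂ hS
  let E₁ := modEquivDiscrete uniqueSent_mem_T₁ Set.univ hstd₁ hpred₁
  let E₂ := modEquivDiscrete uniqueSent_mem_T₂ 𝒮₂ hstd₂ predSet_mem_𝒮₂
  have c₁ : Cardinal.mk (Quotient (isoSetoid.{0,0,0} T₁)) = 2 ^ Cardinal.aleph0 := by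
    rw [Cardinal.mk_congr ((quotEquiv uniqueSent_mem_T₁ Set.univ hstd₁ hpred₁).trans
      Equiv.ulift.{1,0}.symm), Cardinal.mk_uLift, Cardinal.mk_univ, Cardinal.mk_set,
      Cardinal.mk_nat]
    simp [Cardinal.lift_power, Cardinal.lift_aleph0]
  have c₂ : Cardinal.mk (Quotient (isoSetoid.{0,0,0} T₂)) = 2 ^ Cardinal.aleph0 := by
    rw [Cardinal.mk_congr ((quotEquiv uniqueSent_mem_T₂ 𝒮₂ hstd₂ predSet_mem_𝒮₂).trans
      Equiv.ulift.{1,0}.symm), Cardinal.mk_uLift, mk_𝒮₂]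
    simp [Cardinal.lift_power, Cardinal.lift_aleph0]
  have hmk : Cardinal.mk ↥(Set.univ : Set (Set ℕ)) = Cardinal.mk ↥𝒮₂ := by
    rw [mk_𝒮₂, Cardinal.mk_univ, Cardinal.mk_set, Cardinal.mk_nat]
  obtain ⟨e⟩ := Cardinal.eq.1 hmk
  exact ⟨⟨_, ⟨E₁.trans (Discrete.equivalence Equiv.ulift.symm)⟩⟩,
    ⟨_, ⟨E₂.trans (Discrete.equivalence Equiv.ulift.symm)⟩⟩, c₁, c₂, ⟨E₁.trans ((Discrete.equivalence e).trans E₂.symm)⟩⟩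


end MoritaPaper
end
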